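/- Equip ℝ³ with the norm ‖(x,y,z)‖ := max(|x| + |z|, √(x² + y²)). Then its dual unit ball B° ⊂ (ℝ³)* ≅ ℝ³ equals the convex hull of the square with vertices (±1, 0, ±1) together with the circle {(x,y,0) : x² + y² = 1}; moreover the point (1,0,0) belongs to B° but is not an extreme point of B°, while each point (cos(1/n), sin(1/n), 0), n ≥ 1, is an extreme point of B°. -/

import Mathlib

open Set

noncomputable section

/-- The norm `‖(x,y,z)‖ = max(|x| + |z|, √(x² + y²))` on `ℝ³`. -/
def N3 (p : ℝ × ℝ × ℝ) : ℝ :=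
  max (|p.1| + |p.2.2|) (Real.sqrt (p.1 ^ 2 + p.2.1 ^ 2))

/-- The standard pairing on `ℝ³`, identifying `(ℝ³)*` with `ℝ³`. -/
def dot3 (a b : ℝ × ℝ × ℝ) : ℝ := a.1 * b.1 + a.2.1 * b.2.1 + a.2.2 * b.2.2

/-- The dual unit ball `B° = {y : ⟨y,x⟩ ≥ −1 for all x with ‖x‖ ≤ 1}`. -/
def dualBall3 : Set (ℝ × ℝ × ℝ) := {y | ∀ x : ℝ × ℝ × ℝ, N3 x ≤ 1 → -1 ≤ dot3 y x}

/-- The square with vertices `(±1, 0, ±1)`. -/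
def square3 : Set (ℝ × ℝ × ℝ) :=
  {((1 : ℝ), (0 : ℝ), (1 : ℝ)), (1, 0, -1), (-1, 0, 1), (-1, 0, -1)}

/-- The circle `{(x,y,0) : x² + y² = 1}`. -/
def circle3 : Set (ℝ × ℝ × ℝ) := {p | p.1 ^ 2 + p.2.1 ^ 2 = 1 ∧ p.2.2 = 0}

def sg (x : ℝ) : ℝ := if 0 ≤ x then 1 else -1

lemma sg_mul_abs (x : ℝ) : sg x * |x| = x := by
  unfold sg; split <;> rename_i h
  · rw [abs_of_nonneg h]; ring
  · rw [abs_of_neg (lt_of_not_ge h)]; ring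

lemma mul_sg (x : ℝ) : x * sg x = |x| := by
  unfold sg; split <;> rename_i h
  · rw [abs_of_nonneg h]; ring
  · rw [abs_of_neg (lt_of_not_ge h)]; ring

lemma abs_sg (x : ℝ) : |sg x| = 1 := by
  unfold sg; split <;> norm_num

lemma sg_cases (x : ℝ) : sg x = 1 ∨ sg x = -1 := by
  unfold sg; split <;> simp

-- disk inside hull of circle
lemma disk_subset_hull (p : ℝ × ℝ × ℝ) (h : p.1 ^ 2 + p.2.1 ^ 2 ≤ 1) (hz : p.2.2 = 0) :
    p ∈ convexHull ℝ circle3 := by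
  by_cases h0 : p.1 ^ 2 + p.2.1 ^ 2 = 0
  · have hp1 : p.1 = 0 := by nlinarith [sq_nonneg p.1, sq_nonneg p.2.1]
    have hp2 : p.2.1 = 0 := by nlinarith [sq_nonneg p.1, sq_nonneg p.2.1]
    have hmem : p ∈ segment ℝ (((1:ℝ),(0:ℝ),(0:ℝ)) : ℝ × ℝ × ℝ) ((-1,0,0) : ℝ × ℝ × ℝ) := by
      refine ⟨1/2, 1/2, by norm_num, by norm_num, by norm_num, ?_⟩
      apply Prod.ext
      · simp [hp1]
      · apply Prod.ext
        · simp [hp2]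
        · simp [hz]
    exact (convex_convexHull ℝ circle3).segment_subset
      (subset_convexHull ℝ _ (by constructor <;> norm_num))
      (subset_convexHull ℝ _ (by constructor <;> norm_num)) hmem
  · set S := p.1 ^ 2 + p.2.1 ^ 2 with hS
    have hSpos : 0 < S := lt_of_le_of_ne (by positivity) (Ne.symm h0)
    set r := Real.sqrt S with hr
    have hrpos : 0 < r := Real.sqrt_pos.mpr hSpos
    have hr2 : r ^ 2 = S := Real.sq_sqrt hSpos.le
    have hr1 : r ≤ 1 := Real.sqrt_le_one.mpr h
    have hq : ((p.1 / r, p.2.1 / r, (0:ℝ)) : ℝ × ℝ × ℝ) ∈ circle3 := by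
      constructor
      · simp only
        field_simp
        nlinarith
      · rfl
    have hq' : ((-(p.1 / r), -(p.2.1 / r), (0:ℝ)) : ℝ × ℝ × ℝ) ∈ circle3 := by
      constructor
      · simp only
        field_simp
        nlinarith
      · rfl
    have hmem : p ∈ segment ℝ ((p.1 / r, p.2.1 / r, (0:ℝ)) : ℝ × ℝ × ℝ)
        ((-(p.1 / r), -(p.2.1 / r), (0:ℝ)) : ℝ × ℝ × ℝ) := by
      refine ⟨(1+r)/2, (1-r)/2, by linarith, by linarith, by ring, ?_⟩
      apply Prod.ext
      · simp only [Prod.smul_fst, Prod.fst_add, smul_eq_mul]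
        field_simp
        ring
      · apply Prod.ext
        · simp only [Prod.smul_snd, Prod.snd_add, Prod.smul_fst, Prod.fst_add, smul_eq_mul]
          field_simp
          ring
        · simp [hz]
    exact (convex_convexHull ℝ circle3).segment_subset
      (subset_convexHull ℝ _ hq) (subset_convexHull ℝ _ hq') hmem

-- full square inside hull of square3
lemma square_subset_hull (p : ℝ × ℝ × ℝ) (h1 : |p.1| ≤ 1) (h3 : |p.2.2| ≤ 1)
    (hy : p.2.1 = 0) : p ∈ convexHull ℝ square3 := by
  obtain ⟨h1a, h1b⟩ := abs_le.mp h1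
  obtain ⟨h3a, h3b⟩ := abs_le.mp h3
  have top : ((p.1, (0:ℝ), (1:ℝ)) : ℝ × ℝ × ℝ) ∈ convexHull ℝ square3 := by
    apply (convex_convexHull ℝ square3).segment_subset
      (subset_convexHull ℝ _ (show (((1:ℝ),(0:ℝ),(1:ℝ)) : ℝ × ℝ × ℝ) ∈ square3 by left; rfl))
      (subset_convexHull ℝ _ (show (((-1:ℝ),(0:ℝ),(1:ℝ)) : ℝ × ℝ × ℝ) ∈ square3 by
        right; right; left; rfl))
    refine ⟨(1+p.1)/2, (1-p.1)/2, by linarith, by linarith, by ring, ?_⟩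
    apply Prod.ext
    · simp only [Prod.smul_fst, Prod.fst_add, smul_eq_mul]; ring
    · apply Prod.ext <;> simp only [Prod.smul_snd, Prod.snd_add, Prod.smul_fst,
        Prod.fst_add, smul_eq_mul] <;> ring
  have bot : ((p.1, (0:ℝ), (-1:ℝ)) : ℝ × ℝ × ℝ) ∈ convexHull ℝ square3 := by
    apply (convex_convexHull ℝ square3).segment_subset
      (subset_convexHull ℝ _ (show (((1:ℝ),(0:ℝ),(-1:ℝ)) : ℝ × ℝ × ℝ) ∈ square3 by
        right; left; rfl))
      (subset_convexHull ℝ _ (show (((-1:ℝ),(0:ℝ),(-1:ℝ)) : ℝ × ℝ × ℝ) ∈ square3 by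
        right; right; right; rfl))
    refine ⟨(1+p.1)/2, (1-p.1)/2, by linarith, by linarith, by ring, ?_⟩
    apply Prod.ext
    · simp only [Prod.smul_fst, Prod.fst_add, smul_eq_mul]; ring
    · apply Prod.ext <;> simp only [Prod.smul_snd, Prod.snd_add, Prod.smul_fst,
        Prod.fst_add, smul_eq_mul] <;> ring
  apply (convex_convexHull ℝ square3).segment_subset top bot
  refine ⟨(1+p.2.2)/2, (1-p.2.2)/2, by linarith, by linarith, by ring, ?_⟩
  apply Prod.ext
  · simp only [Prod.smul_fst, Prod.fst_add, smul_eq_mul]; ring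
  · apply Prod.ext <;> simp only [Prod.smul_snd, Prod.snd_add, Prod.smul_fst,
      Prod.fst_add, smul_eq_mul]
    · rw [hy]; ring
    · ring

lemma master {a : ℝ × ℝ × ℝ} (ha : a ∈ dualBall3) (x1 y1 z1 : ℝ)
    (h1 : |x1| + |z1| ≤ 1) (h2 : x1 ^ 2 + y1 ^ 2 ≤ 1) :
    a.1 * x1 + a.2.1 * y1 + a.2.2 * z1 ≤ 1 := by
  have h := ha (-x1, -y1, -z1) ?_
  · simp only [dot3] at h; linarith
  · unfold N3
    apply max_le
    · simpa using h1
    · simpa using Real.sqrt_le_one.mpr (by nlinarith)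

lemma mem_dual_of (a : ℝ × ℝ × ℝ)
    (h : ∀ x : ℝ × ℝ × ℝ, |x.1| + |x.2.2| ≤ 1 → x.1 ^ 2 + x.2.1 ^ 2 ≤ 1 → -1 ≤ dot3 a x) :
    a ∈ dualBall3 := by
  intro x hx
  have h1 : |x.1| + |x.2.2| ≤ 1 := le_trans (le_max_left _ _) hx
  have h2 : Real.sqrt (x.1 ^ 2 + x.2.1 ^ 2) ≤ 1 := le_trans (le_max_right _ _) hx
  have h3 : x.1 ^ 2 + x.2.1 ^ 2 ≤ 1 := by
    have := Real.sq_sqrt (show (0:ℝ) ≤ x.1 ^ 2 + x.2.1 ^ 2 by positivity)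
    nlinarith [Real.sqrt_nonneg (x.1 ^ 2 + x.2.1 ^ 2)]
  exact h x h1 h3

lemma square3_subset_dual : square3 ⊆ dualBall3 := by
  intro p hp
  have key : ∀ e1 e3 : ℝ, |e1| ≤ 1 → |e3| ≤ 1 → ((e1, (0:ℝ), e3) : ℝ × ℝ × ℝ) ∈ dualBall3 := by
    intro e1 e3 he1 he3
    apply mem_dual_of
    intro x h1 h2
    simp only [dot3]
    have a1 := abs_mul e1 x.1
    have a2 := abs_mul e3 x.2.2
    have := neg_abs_le (e1 * x.1)
    have := neg_abs_le (e3 * x.2.2)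
    have := abs_nonneg x.1
    have := abs_nonneg x.2.2
    nlinarith
  rcases hp with h | h | h | h <;> (rw [h]; apply key <;> norm_num)

lemma circle3_subset_dual : circle3 ⊆ dualBall3 := by
  rintro ⟨p1, p2, p3⟩ ⟨hc, hz⟩
  simp only at hc hz
  subst hz
  apply mem_dual_of
  intro x h1 h2
  simp only [dot3]
  nlinarith [sq_nonneg (p1 * x.1 + p2 * x.2.1 + 1), sq_nonneg (p1 * x.2.1 - p2 * x.1)]

lemma convex_dualBall3 : Convex ℝ dualBall3 := by
  intro a ha b hb t u ht hu htu
  intro x hx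
  have h1 := ha x hx
  have h2 := hb x hx
  have e : dot3 (t • a + u • b) x = t * dot3 a x + u * dot3 b x := by
    simp only [dot3, Prod.fst_add, Prod.snd_add, Prod.smul_fst, Prod.smul_snd, smul_eq_mul]
    ring
  rw [e]; nlinarith

lemma sq12_le {a : ℝ × ℝ × ℝ} (ha : a ∈ dualBall3) : a.1 ^ 2 + a.2.1 ^ 2 ≤ 1 := by
  by_contra hS
  push_neg at hS
  set S := a.1 ^ 2 + a.2.1 ^ 2 with hSdef
  have hSpos : 0 < S := lt_trans one_pos hS
  set r := Real.sqrt S with hr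
  have hrpos : 0 < r := Real.sqrt_pos.mpr hSpos
  have hr2 : r ^ 2 = S := Real.sq_sqrt hSpos.le
  have h1 : |a.1 / r| + |(0:ℝ)| ≤ 1 := by
    rw [abs_div, abs_of_pos hrpos]
    rw [abs_zero, add_zero, div_le_one hrpos]
    nlinarith [abs_nonneg a.1, sq_abs a.1, sq_nonneg a.2.1]
  have h2 : (a.1 / r) ^ 2 + (a.2.1 / r) ^ 2 ≤ 1 := by
    rw [div_pow, div_pow, ← add_div, div_le_one (by positivity)]
    nlinarith
  have hmas := master ha (a.1 / r) (a.2.1 / r) 0 h1 h2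
  have e : a.1 * (a.1 / r) + a.2.1 * (a.2.1 / r) + a.2.2 * 0 = S / r := by
    rw [hSdef]; field_simp; ring
  rw [e, div_le_one hrpos] at hmas
  nlinarith

lemma h23_le {a : ℝ × ℝ × ℝ} (ha : a ∈ dualBall3) : |a.2.1| + |a.2.2| ≤ 1 := by
  have k1 := master ha 0 1 1 (by norm_num) (by norm_num)
  have k2 := master ha 0 1 (-1) (by norm_num) (by norm_num)
  have k3 := master ha 0 (-1) 1 (by norm_num) (by norm_num)
  have k4 := master ha 0 (-1) (-1) (by norm_num) (by norm_num)
  rcases abs_cases a.2.1 with ⟨e1, _⟩ | ⟨e1, _⟩ <;>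
    rcases abs_cases a.2.2 with ⟨e2, _⟩ | ⟨e2, _⟩ <;> rw [e1, e2] <;> linarith

lemma key_ineq {a : ℝ × ℝ × ℝ} (ha : a ∈ dualBall3) (h : |a.2.2| < |a.1|) :
    (|a.1| - |a.2.2|) ^ 2 + a.2.1 ^ 2 ≤ (1 - |a.2.2|) ^ 2 ∧ |a.2.2| < 1 := by
  set m := |a.1| - |a.2.2| with hm
  have hmpos : 0 < m := by simp [hm]; linarith
  set R := m ^ 2 + a.2.1 ^ 2 with hR
  have hRpos : 0 < R := by positivity
  set ρ := Real.sqrt R with hρ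
  have hρpos : 0 < ρ := Real.sqrt_pos.mpr hRpos
  have hρ2 : ρ ^ 2 = R := Real.sq_sqrt hRpos.le
  have hmρ : m ≤ ρ := by
    nlinarith [sq_nonneg a.2.1, Real.sqrt_nonneg R]
  have hx1 : |sg a.1 * (m / ρ)| + |sg a.2.2 * (1 - m / ρ)| ≤ 1 := by
    rw [abs_mul, abs_mul, abs_sg, abs_sg, one_mul, one_mul,
      abs_of_nonneg (by positivity), abs_of_nonneg (by
        rw [sub_nonneg, div_le_one hρpos]; exact hmρ)]
    linarith
  have hx2 : (sg a.1 * (m / ρ)) ^ 2 + (a.2.1 / ρ) ^ 2 ≤ 1 := by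
    have hsg : (sg a.1) ^ 2 = 1 := by
      rcases sg_cases a.1 with h1 | h1 <;> rw [h1] <;> norm_num
    rw [mul_pow, hsg, one_mul, div_pow, div_pow, ← add_div,
      div_le_one (by positivity)]
    nlinarith
  have hmas := master ha (sg a.1 * (m / ρ)) (a.2.1 / ρ) (sg a.2.2 * (1 - m / ρ)) hx1 hx2
  have e1 : a.1 * (sg a.1 * (m / ρ)) = |a.1| * (m / ρ) := by
    rw [← mul_assoc, mul_sg]
  have e3 : a.2.2 * (sg a.2.2 * (1 - m / ρ)) = |a.2.2| * (1 - m / ρ) := by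
    rw [← mul_assoc, mul_sg]
  rw [e1, e3] at hmas
  have habs1 : |a.1| = m + |a.2.2| := by simp [hm]
  have hsum : ρ + |a.2.2| ≤ 1 := by
    have hcalc : |a.1| * (m / ρ) + a.2.1 * (a.2.1 / ρ) + |a.2.2| * (1 - m / ρ)
        = R / ρ + |a.2.2| := by
      rw [habs1]; field_simp; ring
    rw [hcalc] at hmas
    have : R / ρ = ρ := by
      rw [← hρ2]; field_simp
    linarith [this ▸ hmas]
  constructor
  · have hρle : ρ ≤ 1 - |a.2.2| := by linarith
    nlinarith
  · linarith

lemma dual_subset_hull : dualBall3 ⊆ convexHull ℝ (square3 ∪ circle3) := by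
  intro a ha
  have h23 := h23_le ha
  have hna2 := abs_nonneg a.2.1
  have hna3 := abs_nonneg a.2.2
  by_cases hz : a.2.2 = 0
  · exact convexHull_mono subset_union_right (disk_subset_hull a (sq12_le ha) hz)
  · have hlpos : 0 < |a.2.2| := abs_pos.mpr hz
    by_cases hcase : |a.1| ≤ |a.2.2|
    · by_cases hone : 1 ≤ |a.2.2|
      · have ha2 : a.2.1 = 0 := by
          have : |a.2.1| ≤ 0 := by linarith
          exact abs_eq_zero.mp (le_antisymm this hna2)
        exact convexHull_mono subset_union_left
          (square_subset_hull a (by linarith) (by linarith) ha2)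
      · push_neg at hone
        set l := |a.2.2| with hl
        have h1l : (0:ℝ) < 1 - l := by linarith
        have h1l' : (1:ℝ) - l ≠ 0 := ne_of_gt h1l
        have hl0 : l ≠ 0 := ne_of_gt hlpos
        set s : ℝ × ℝ × ℝ := (a.1 / l, 0, sg a.2.2) with hsdef
        set d : ℝ × ℝ × ℝ := (0, a.2.1 / (1 - l), 0) with hddef
        have hs : s ∈ convexHull ℝ (square3 ∪ circle3) := by
          apply convexHull_mono subset_union_left
          apply square_subset_hull
          · rw [hsdef]
            simp only [abs_div, abs_of_pos hlpos]
            rw [div_le_one hlpos]; exact hcase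
          · rw [hsdef]; simp only [abs_sg]; exact le_refl 1
          · rfl
        have hd : d ∈ convexHull ℝ (square3 ∪ circle3) := by
          apply convexHull_mono subset_union_right
          apply disk_subset_hull
          · rw [hddef]
            simp only
            rw [div_pow, zero_pow (by norm_num), zero_add, div_le_one (by positivity)]
            nlinarith [sq_abs a.2.1]
          · rfl
        have hcomb : a = l • s + (1 - l) • d := by
          apply Prod.ext
          · simp only [Prod.fst_add, Prod.smul_fst, smul_eq_mul, hsdef, hddef]
            field_simp
            ring
          · apply Prod.ext
            · simp only [Prod.snd_add, Prod.smul_snd, Prod.fst_add, Prod.smul_fst,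
                smul_eq_mul, hsdef, hddef]
              field_simp
              ring
            · simp only [Prod.snd_add, Prod.smul_snd, smul_eq_mul, hsdef, hddef]
              rw [mul_zero, add_zero, mul_comm, hl, sg_mul_abs]
        rw [hcomb]
        exact convex_convexHull ℝ _ hs hd (abs_nonneg _) (by linarith) (by ring)
    · push_neg at hcase
      obtain ⟨hkey, hone⟩ := key_ineq ha hcase
      have h1l : (0:ℝ) < 1 - |a.2.2| := by linarith
      have h1l' : (1:ℝ) - |a.2.2| ≠ 0 := ne_of_gt h1l
      set s : ℝ × ℝ × ℝ := (sg a.1, 0, sg a.2.2) with hsdef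
      set d : ℝ × ℝ × ℝ := (sg a.1 * ((|a.1| - |a.2.2|) / (1 - |a.2.2|)),
        a.2.1 / (1 - |a.2.2|), 0) with hddef
      have hsg : (sg a.1) ^ 2 = 1 := by
        rcases sg_cases a.1 with h1 | h1 <;> rw [h1] <;> norm_num
      have hs : s ∈ convexHull ℝ (square3 ∪ circle3) := by
        refine subset_convexHull ℝ _ (Or.inl ?_)
        rcases sg_cases a.1 with h1 | h1 <;> rcases sg_cases a.2.2 with h3 | h3 <;>
          rw [hsdef, h1, h3] <;> simp [square3]
      have hd : d ∈ convexHull ℝ (square3 ∪ circle3) := by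
        apply convexHull_mono subset_union_right
        apply disk_subset_hull
        · rw [hddef]
          simp only
          rw [mul_pow, hsg, one_mul, div_pow, div_pow, ← add_div,
            div_le_one (by positivity)]
          exact hkey
        · rfl
      have hcomb : a = |a.2.2| • s + (1 - |a.2.2|) • d := by
        apply Prod.ext
        · simp only [Prod.fst_add, Prod.smul_fst, smul_eq_mul, hsdef, hddef]
          have e : |a.2.2| * sg a.1 +
              (1 - |a.2.2|) * (sg a.1 * ((|a.1| - |a.2.2|) / (1 - |a.2.2|)))
              = sg a.1 * |a.1| := by field_simp; ring
          rw [e, sg_mul_abs]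
        · apply Prod.ext
          · simp only [Prod.snd_add, Prod.smul_snd, Prod.fst_add, Prod.smul_fst,
              smul_eq_mul, hsdef, hddef]
            field_simp
            ring
          · simp only [Prod.snd_add, Prod.smul_snd, smul_eq_mul, hsdef, hddef]
            rw [mul_zero, add_zero, mul_comm, sg_mul_abs]
      rw [hcomb]
      exact convex_convexHull ℝ _ hs hd (abs_nonneg _) (by linarith) (by ring)

lemma circle_extreme {c t : ℝ} (hcs : c ^ 2 + t ^ 2 = 1) (ht : 0 < t) :
    ((c, t, 0) : ℝ × ℝ × ℝ) ∈ dualBall3.extremePoints ℝ := by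
  have hc1 : |c| < 1 := by nlinarith [abs_nonneg c, sq_abs c]
  have hmem : ((c, t, 0) : ℝ × ℝ × ℝ) ∈ dualBall3 :=
    circle3_subset_dual ⟨by simpa using hcs, rfl⟩
  rw [mem_extremePoints]
  refine ⟨hmem, ?_⟩
  intro x1 hx1 x2 hx2 hseg
  obtain ⟨p, q, hp, hq, hpq, heq⟩ := hseg
  have e1 : p * x1.1 + q * x2.1 = c := by
    have := congrArg Prod.fst heq
    simpa using this
  have e2 : p * x1.2.1 + q * x2.2.1 = t := by
    have := congrArg (fun z : ℝ × ℝ × ℝ => z.2.1) heq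
    simpa using this
  have key : ∀ y : ℝ × ℝ × ℝ, y ∈ dualBall3 → c * y.1 + t * y.2.1 = 1 →
      y = ((c, t, 0) : ℝ × ℝ × ℝ) := by
    intro y hy hone
    have hsq := sq12_le hy
    have h1 : (y.1 - c) ^ 2 + (y.2.1 - t) ^ 2 ≤ 0 := by nlinarith
    have hy1 : y.1 = c := by nlinarith [sq_nonneg (y.1 - c), sq_nonneg (y.2.1 - t)]
    have hy2 : y.2.1 = t := by nlinarith [sq_nonneg (y.1 - c), sq_nonneg (y.2.1 - t)]
    have k1 := master hy c t (1 - |c|) (by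
        rw [abs_of_nonneg (by linarith [abs_nonneg c] : (0:ℝ) ≤ 1 - |c|)]; linarith)
      (le_of_eq hcs)
    have k2 := master hy c t (-(1 - |c|)) (by
        rw [abs_neg, abs_of_nonneg (by linarith [abs_nonneg c] : (0:ℝ) ≤ 1 - |c|)]; linarith)
      (le_of_eq hcs)
    rw [hy1, hy2] at k1 k2
    have hy3 : y.2.2 = 0 := by nlinarith
    exact Prod.ext hy1 (Prod.ext hy2 hy3)
  have a1le := master hx1 c t 0 (by simpa using hc1.le) (le_of_eq hcs)
  have a2le := master hx2 c t 0 (by simpa using hc1.le) (le_of_eq hcs)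
  simp only [mul_zero, add_zero] at a1le a2le
  have hsum : p * (x1.1 * c + x1.2.1 * t) + q * (x2.1 * c + x2.2.1 * t) = 1 := by
    linear_combination c * e1 + t * e2 + hcs
  have ha1 : x1.1 * c + x1.2.1 * t = 1 := by nlinarith
  have ha2 : x2.1 * c + x2.2.1 * t = 1 := by nlinarith
  exact ⟨key x1 hx1 (by linarith [ha1]), key x2 hx2 (by linarith [ha2])⟩


/-- The dual unit ball of the norm `max(|x| + |z|, √(x² + y²))` on `ℝ³` is the convex
hull of the square with vertices `(±1,0,±1)` and the circle `{(x,y,0) : x²+y²=1}`;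
the point `(1,0,0)` belongs to it but is not an extreme point, while each point
`(cos(1/n), sin(1/n), 0)`, `n ≥ 1`, is an extreme point. -/
theorem dualBall3_description :
    dualBall3 = convexHull ℝ (square3 ∪ circle3) ∧
    ((1 : ℝ), (0 : ℝ), (0 : ℝ)) ∈ dualBall3 ∧
    ((1 : ℝ), (0 : ℝ), (0 : ℝ)) ∉ dualBall3.extremePoints ℝ ∧
    ∀ n : ℕ, 1 ≤ n →
      ((Real.cos (1 / n), Real.sin (1 / n), 0) : ℝ × ℝ × ℝ) ∈
        dualBall3.extremePoints ℝ := by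
  refine ⟨Set.Subset.antisymm dual_subset_hull
    (convexHull_min (union_subset square3_subset_dual circle3_subset_dual) convex_dualBall3),
    ?_, ?_, ?_⟩
  · apply mem_dual_of
    intro x h1 h2
    simp only [dot3]
    have := neg_abs_le x.1
    have := abs_nonneg x.2.2
    nlinarith
  · rw [mem_extremePoints]
    rintro ⟨-, hext⟩
    have hA : (((1:ℝ), (0:ℝ), (1:ℝ)) : ℝ × ℝ × ℝ) ∈ dualBall3 :=
      square3_subset_dual (by left; rfl)
    have hB : (((1:ℝ), (0:ℝ), (-1:ℝ)) : ℝ × ℝ × ℝ) ∈ dualBall3 :=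
      square3_subset_dual (by right; left; rfl)
    have hseg : (((1:ℝ), (0:ℝ), (0:ℝ)) : ℝ × ℝ × ℝ) ∈
        openSegment ℝ (((1:ℝ), (0:ℝ), (1:ℝ)) : ℝ × ℝ × ℝ) ((1, 0, -1) : ℝ × ℝ × ℝ) := by
      refine ⟨1/2, 1/2, by norm_num, by norm_num, by norm_num, ?_⟩
      apply Prod.ext
      · norm_num
      · apply Prod.ext <;> norm_num
    have := (hext _ hA _ hB hseg).1
    rw [Prod.ext_iff] at this
    have := this.2
    rw [Prod.ext_iff] at this
    norm_num at this
  · intro n hn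
    have hn1 : (1:ℝ) ≤ (n:ℝ) := by exact_mod_cast hn
    have hpos : 0 < 1 / (n:ℝ) := by positivity
    have hle : 1 / (n:ℝ) ≤ 1 := by
      rw [div_le_one (by linarith)]; exact hn1
    have hlt : 1 / (n:ℝ) < Real.pi := lt_of_le_of_lt hle
      (lt_trans (by norm_num) Real.pi_gt_three)
    exact circle_extreme (by rw [add_comm]; exact Real.sin_sq_add_cos_sq _)
      (Real.sin_pos_of_pos_of_lt_pi hpos hlt)
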